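/- Let h : [0,∞) → [0,1] be a fixed control function and a, b : [0,∞) → [0,∞). Suppose that for ALL joint distributions of nonnegative random variables (E^a, E) with E[E] ≤ 1 (and U ~ Uniform(0,1) independent of (E^a,E)), the statistic E^active = a(E^a)·1{U ≥ h(E^a)} + b(E^a)·E·1{U < h(E^a)} satisfies E[E^active] ≤ 1. Then there exists β ∈ [0,1] such that sup_{x≥0} a(x)(1 - h(x)) ≤ β and sup_{x≥0} b(x)h(x) ≤ 1 - β. -/

import Mathlib

open MeasureTheory Set ProbabilityTheory

private lemma prob_restrict : IsProbabilityMeasure (volume.restrict (Icc (0:ℝ) 1)) :=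
  ⟨by rw [Measure.restrict_apply_univ, Real.volume_Icc]; norm_num⟩

private lemma vol_Iio (c : ℝ) (hc : c ∈ Icc (0:ℝ) 1) :
    (volume.restrict (Icc (0:ℝ) 1)) (Iio c) = ENNReal.ofReal c := by
  rw [Measure.restrict_apply measurableSet_Iio]
  have hseq : Iio c ∩ Icc (0:ℝ) 1 = Ico 0 c := by
    ext u
    simp only [mem_inter_iff, mem_Iio, mem_Icc, mem_Ico]
    constructor
    · rintro ⟨h1, h2, _⟩; exact ⟨h2, h1⟩
    · rintro ⟨h1, h2⟩; exact ⟨h2, h1, le_trans (le_of_lt h2) hc.2⟩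
  rw [hseq, Real.volume_Ico, sub_zero]

private lemma step_meas (c r s : ℝ) : Measurable (fun u : ℝ => if u < c then r else s) :=
  Measurable.ite measurableSet_Iio measurable_const measurable_const

private lemma step_int (c r s : ℝ) :
    Integrable (fun u : ℝ => if u < c then r else s) (volume.restrict (Icc (0:ℝ) 1)) := by
  haveI := prob_restrict
  refine (integrable_const (|r| + |s|)).mono' (step_meas c r s).aestronglyMeasurable ?_
  refine Filter.Eventually.of_forall fun u => ?_
  by_cases hu : u < c <;> simp only [hu, if_true, if_false, Real.norm_eq_abs] <;>
    [linarith [abs_nonneg s]; linarith [abs_nonneg r]]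

private lemma step_val (c r s : ℝ) (hc : c ∈ Icc (0:ℝ) 1) :
    ∫ u, (if u < c then r else s) ∂(volume.restrict (Icc (0:ℝ) 1)) = r * c + s * (1 - c) := by
  haveI := prob_restrict
  have hfun : (fun u : ℝ => if u < c then r else s)
      = fun u => (Iio c).indicator (fun _ => r - s) u + s := by
    funext u
    by_cases hu : u < c <;> simp [Set.indicator, hu]
  rw [hfun, integral_add ((integrable_const (r - s)).indicator measurableSet_Iio)
        (integrable_const s),
    integral_indicator_const _ measurableSet_Iio, integral_const, measureReal_def, measureReal_def,
    vol_Iio c hc,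
    ENNReal.toReal_ofReal hc.1, measure_univ]
  simp only [smul_eq_mul, ENNReal.toReal_one, one_mul]
  ring

private lemma indep_const_aux {Ω : Type} [MeasurableSpace Ω] (μ : Measure Ω)
    [IsProbabilityMeasure μ] (U : Ω → ℝ) (c : ℝ × ℝ) :
    IndepFun U (fun _ => c) μ := by
  rw [indepFun_iff_measure_inter_preimage_eq_mul]
  intro s t _ _
  by_cases hc : c ∈ t
  · simp [Set.preimage_const_of_mem hc]
  · simp [Set.preimage_const_of_notMem hc]

private lemma indep_fst_aux (g : ℝ → ℝ × ℝ) :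
    IndepFun Prod.fst (fun ω : ℝ × ℝ => g ω.2)
      ((volume.restrict (Icc (0:ℝ) 1)).prod (volume.restrict (Icc (0:ℝ) 1))) := by
  haveI := prob_restrict
  rw [indepFun_iff_measure_inter_preimage_eq_mul]
  intro s t _ _
  have h1 : (Prod.fst ⁻¹' s) ∩ ((fun ω : ℝ × ℝ => g ω.2) ⁻¹' t) = s ×ˢ (g ⁻¹' t) := by
    ext ω; simp [Set.mem_prod, Set.mem_preimage]
  have h2 : (Prod.fst ⁻¹' s : Set (ℝ × ℝ)) = s ×ˢ (univ : Set ℝ) := by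
    ext ω; simp
  have h3 : ((fun ω : ℝ × ℝ => g ω.2) ⁻¹' t) = (univ : Set ℝ) ×ˢ (g ⁻¹' t) := by
    ext ω; simp
  rw [h1, h2, h3, Measure.prod_prod, Measure.prod_prod, Measure.prod_prod]
  simp [measure_univ]

/-- Necessity of the β-decomposition: if the active e-value is valid for all joint
distributions of `(E^a, E)` with `𝔼[E] ≤ 1`, then some `β ∈ [0,1]` bounds the two branches. -/
theorem active_evalue_characterization_necessity
    (h a b : ℝ → ℝ)
    (hh01 : ∀ x, 0 ≤ x → h x ∈ Icc (0:ℝ) 1)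
    (hann : ∀ x, 0 ≤ x → 0 ≤ a x) (hbnn : ∀ x, 0 ≤ x → 0 ≤ b x)
    (H : ∀ (Ω : Type) [MeasurableSpace Ω] (μ : Measure Ω), IsProbabilityMeasure μ →
      ∀ (E Ea U : Ω → ℝ), Measurable E → Measurable Ea → Measurable U →
        (∀ ω, 0 ≤ E ω) → (∀ ω, 0 ≤ Ea ω) → Integrable E μ → (∫ ω, E ω ∂μ) ≤ 1 →
        μ.map U = volume.restrict (Icc (0:ℝ) 1) →
        IndepFun U (fun ω => (Ea ω, E ω)) μ →
        ∫ ω, (if U ω < h (Ea ω) then b (Ea ω) * E ω else a (Ea ω)) ∂μ ≤ 1) :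
    ∃ β ∈ Icc (0:ℝ) 1,
      (∀ x, 0 ≤ x → a x * (1 - h x) ≤ β) ∧ (∀ x, 0 ≤ x → b x * h x ≤ 1 - β) := by
  haveI := prob_restrict
  set μ1 : Measure ℝ := volume.restrict (Icc (0:ℝ) 1) with hμ1
  -- Step 1: each branch with E = 0 gives a x * (1 - h x) ≤ 1
  have K1 : ∀ x, 0 ≤ x → a x * (1 - h x) ≤ 1 := by
    intro x hx
    have hkey := H ℝ μ1 prob_restrict (fun _ => 0) (fun _ => x) id
      measurable_const measurable_const measurable_id
      (fun _ => le_rfl) (fun _ => hx) (integrable_const 0)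
      (by simp) (Measure.map_id) (indep_const_aux μ1 id (x, 0))
    have hval : ∫ u, (if u < h x then b x * 0 else a x) ∂μ1
        = (b x * 0) * h x + a x * (1 - h x) := step_val (h x) (b x * 0) (a x) (hh01 x hx)
    rw [show (fun ω : ℝ => if id ω < h ((fun _ => x) ω) then
          b ((fun _ => x) ω) * (fun _ => (0:ℝ)) ω else a ((fun _ => x) ω))
        = fun u : ℝ => if u < h x then b x * 0 else a x from rfl] at hkey
    rw [hval] at hkey
    linarith
  -- Step 2: two-point distribution gives the joint inequality for every p ∈ (0,1)
  have K2 : ∀ x y, 0 ≤ x → 0 ≤ y → ∀ p : ℝ, 0 < p → p < 1 →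
      b y * h y + p * (a y * (1 - h y)) + (1 - p) * (a x * (1 - h x)) ≤ 1 := by
    intro x y hx hy p hp hp1
    have hp01 : p ∈ Icc (0:ℝ) 1 := ⟨le_of_lt hp, le_of_lt hp1⟩
    set μ : Measure (ℝ × ℝ) := μ1.prod μ1 with hμ
    haveI : IsProbabilityMeasure μ := by rw [hμ]; infer_instance
    set E : ℝ × ℝ → ℝ := fun ω => if ω.2 < p then 1/p else 0 with hE
    set Ea : ℝ × ℝ → ℝ := fun ω => if ω.2 < p then y else x with hEa
    have hsetm : MeasurableSet {ω : ℝ × ℝ | ω.2 < p} :=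
      measurableSet_lt measurable_snd measurable_const
    have hEm : Measurable E := Measurable.ite hsetm measurable_const measurable_const
    have hEam : Measurable Ea := Measurable.ite hsetm measurable_const measurable_const
    have hEnn : ∀ ω, 0 ≤ E ω := by
      intro ω; by_cases hω : ω.2 < p <;> simp [hE, hω] <;> positivity
    have hEann : ∀ ω, 0 ≤ Ea ω := by
      intro ω; by_cases hω : ω.2 < p <;> simp [hEa, hω] <;> assumption
    have hEind : E = fun ω : ℝ × ℝ => (Prod.snd ⁻¹' Iio p).indicator (fun _ => 1/p) ω := by
      funext ω
      by_cases hω : ω.2 < p <;>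
        simp [hE, Set.indicator_apply, Set.mem_preimage, Set.mem_Iio, hω]
    have hpre : (Prod.snd ⁻¹' Iio p : Set (ℝ × ℝ)) = (univ : Set ℝ) ×ˢ Iio p := by
      ext ω; simp
    have hmeaspre : μ (Prod.snd ⁻¹' Iio p) = ENNReal.ofReal p := by
      rw [hpre, hμ, Measure.prod_prod, measure_univ, one_mul, vol_Iio p hp01]
    have hEint : Integrable E μ := by
      rw [hEind]
      exact (integrable_const (1/p)).indicator (measurable_snd measurableSet_Iio)
    have hEval : (∫ ω, E ω ∂μ) = 1 := by
      rw [hEind, integral_indicator_const _ (measurable_snd measurableSet_Iio), measureReal_def, hmeaspre,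
        ENNReal.toReal_ofReal (le_of_lt hp), smul_eq_mul]
      field_simp
    have hmap : μ.map Prod.fst = μ1 := by
      rw [hμ, Measure.map_fst_prod, measure_univ, one_smul]
    have hindep : IndepFun (fun ω : ℝ × ℝ => ω.1) (fun ω => (Ea ω, E ω)) μ := by
      have := indep_fst_aux (fun t : ℝ => ((if t < p then y else x), (if t < p then 1/p else 0)))
      exact this
    have hkey := H (ℝ × ℝ) μ inferInstance E Ea (fun ω => ω.1)
      hEm hEam measurable_fst hEnn hEann hEint (le_of_eq hEval) hmap hindep
    -- rewrite the integrand into a two-level step function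
    set G1 : ℝ → ℝ := fun u => if u < h x then b x * 0 else a x with hG1
    set G2 : ℝ → ℝ := fun u => if u < h y then b y * (1/p) else a y with hG2
    set F : ℝ × ℝ → ℝ := fun ω => if ω.2 < p then G2 ω.1 else G1 ω.1 with hF
    have hinteq : (fun ω : ℝ × ℝ => if ω.1 < h (Ea ω) then b (Ea ω) * E ω else a (Ea ω)) = F := by
      funext ω
      by_cases hω : ω.2 < p <;> simp [hF, hG1, hG2, hEa, hE, hω]
    rw [hinteq] at hkey
    have hFm : Measurable F :=
      Measurable.ite hsetm ((step_meas (h y) (b y * (1/p)) (a y)).comp measurable_fst)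
        ((step_meas (h x) (b x * 0) (a x)).comp measurable_fst)
    have hFint : Integrable F μ := by
      set C : ℝ := |b y * (1/p)| + |a y| + (|b x * 0| + |a x|) with hC
      refine (integrable_const C).mono' hFm.aestronglyMeasurable ?_
      refine Filter.Eventually.of_forall fun ω => ?_
      have h1 := abs_nonneg (b y * (1/p)); have h2 := abs_nonneg (a y)
      have h3 := abs_nonneg (b x * 0); have h4 := abs_nonneg (a x)
      by_cases hω : ω.2 < p <;> by_cases hu : ω.1 < h y <;> by_cases hv : ω.1 < h x <;>
        simp only [hF, hG1, hG2, hω, hu, hv, if_true, if_false, Real.norm_eq_abs, hC] <;>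
        linarith [le_abs_self (b y * (1/p)), le_abs_self (a y), le_abs_self (b x * 0),
          le_abs_self (a x)]
    have hprod : ∫ ω, F ω ∂μ = ∫ u, (∫ t, F (u, t) ∂μ1) ∂μ1 := by
      rw [hμ]; exact MeasureTheory.integral_prod F hFint
    have hinner : ∀ u : ℝ, (∫ t, F (u, t) ∂μ1) = G2 u * p + G1 u * (1 - p) := fun u =>
      step_val p (G2 u) (G1 u) hp01
    have houter : ∫ u, (∫ t, F (u, t) ∂μ1) ∂μ1
        = (∫ u, G2 u ∂μ1) * p + (∫ u, G1 u ∂μ1) * (1 - p) := by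
      simp_rw [hinner]
      rw [integral_add ((step_int (h y) (b y * (1/p)) (a y)).mul_const p)
        ((step_int (h x) (b x * 0) (a x)).mul_const (1 - p)),
        integral_mul_const, integral_mul_const]
    have hG2val : (∫ u, G2 u ∂μ1) = (b y * (1/p)) * h y + a y * (1 - h y) :=
      step_val (h y) (b y * (1/p)) (a y) (hh01 y hy)
    have hG1val : (∫ u, G1 u ∂μ1) = (b x * 0) * h x + a x * (1 - h x) :=
      step_val (h x) (b x * 0) (a x) (hh01 x hx)
    rw [hprod, houter, hG2val, hG1val] at hkey
    have hexpand : ((b y * (1/p)) * h y + a y * (1 - h y)) * p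
        + ((b x * 0) * h x + a x * (1 - h x)) * (1 - p)
        = b y * h y + p * (a y * (1 - h y)) + (1 - p) * (a x * (1 - h x)) := by
      field_simp
      ring
    linarith [hexpand ▸ hkey]
  -- Step 3: let p → 0
  have K3 : ∀ x y, 0 ≤ x → 0 ≤ y → a x * (1 - h x) + b y * h y ≤ 1 := by
    intro x y hx hy
    refine le_of_forall_pos_le_add fun ε hε => ?_
    set A := a x * (1 - h x) with hA
    have hAnn : 0 ≤ A := mul_nonneg (hann x hx) (by linarith [(hh01 x hx).2])
    have hAynn : 0 ≤ a y * (1 - h y) := mul_nonneg (hann y hy) (by linarith [(hh01 y hy).2])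
    set p : ℝ := min (1/2) (ε / (A + 1)) with hpdef
    have hppos : 0 < p := lt_min (by norm_num) (by positivity)
    have hplt : p < 1 := lt_of_le_of_lt (min_le_left _ _) (by norm_num)
    have hkey := K2 x y hx hy p hppos hplt
    have hpA : p * A ≤ ε := by
      have h1 : p ≤ ε / (A + 1) := min_le_right _ _
      have h2 : ε / (A + 1) * A ≤ ε := by
        rw [div_mul_eq_mul_div, div_le_iff₀ (by linarith)]
        nlinarith
      nlinarith
    nlinarith
  -- Step 4: take β as the supremum of the first branch
  set S : Set ℝ := {z : ℝ | ∃ x : ℝ, 0 ≤ x ∧ z = a x * (1 - h x)} with hS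
  have hSne : S.Nonempty := ⟨a 0 * (1 - h 0), 0, le_refl 0, rfl⟩
  have hSub : ∀ z ∈ S, z ≤ 1 := by rintro z ⟨x, hx, rfl⟩; exact K1 x hx
  have hbdd : BddAbove S := ⟨1, fun z hz => hSub z hz⟩
  set β := sSup S with hβ
  have hβ1 : β ≤ 1 := csSup_le hSne hSub
  have hβ0 : 0 ≤ β := by
    have h0 : a 0 * (1 - h 0) ≤ β := le_csSup hbdd ⟨0, le_refl 0, rfl⟩
    have : 0 ≤ a 0 * (1 - h 0) := mul_nonneg (hann 0 le_rfl) (by linarith [(hh01 0 le_rfl).2])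
    linarith
  refine ⟨β, ⟨hβ0, hβ1⟩, fun x hx => le_csSup hbdd ⟨x, hx, rfl⟩, fun y hy => ?_⟩
  have : β ≤ 1 - b y * h y := by
    refine csSup_le hSne ?_
    rintro z ⟨x, hx, rfl⟩
    linarith [K3 x y hx hy]
  linarith
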